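/- Let Λ be an Artin algebra, V an indecomposable finitely generated Λ-module, and D ⊆ mod Λ an additively closed class with Φ-dim(D) = n < ∞. Then Φ-dim(D ⊕ add V) < ∞. -/

import Mathlib

open scoped Classical

/-- An abstract model of the category `mod Λ` of finitely generated left modules over
an Artin algebra `Λ`, presented through the Krull–Schmidt theorem: a finitely
generated module is (the isomorphism class of) a finite multiset of indecomposable
modules.  The data records which indecomposables are projective, and the multiset of
indecomposable direct summands of the syzygy of each indecomposable (the kernel of a
projective cover). -/
structure ModData where
  /-- iso classes of indecomposable finitely generated modules -/
  Idec : Type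
  /-- which indecomposables are projective -/
  proj : Idec → Prop
  /-- the syzygy of an indecomposable -/
  syz : Idec → Multiset Idec

namespace ModData

variable (Λ : ModData)

/-- finitely generated `Λ`-modules (multisets of indecomposables) -/
abbrev Mod := Multiset Λ.Idec

/-- the syzygy operator `Ω` (extended additively) -/
def Ω (X : Λ.Mod) : Λ.Mod := X.bind Λ.syz

/-- `X` is a projective module -/
def IsProj (X : Λ.Mod) : Prop := ∀ i ∈ X, Λ.proj i

/-- the projective dimension `pd X ∈ ℕ∞`: the least `m` with `Ω^[m] X` projective
(and `⊤` if there is no such `m`) -/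
noncomputable def pd (X : Λ.Mod) : ℕ∞ :=
  sInf ((fun m : ℕ => (m : ℕ∞)) '' {m : ℕ | Λ.IsProj (Λ.Ω^[m] X)})

/-- the free abelian group `K` on the iso classes of indecomposable non-projective
finitely generated modules -/
abbrev K := FreeAbelianGroup {i : Λ.Idec // ¬ Λ.proj i}

/-- the class `[X]` of an indecomposable in `K` (projectives are sent to `0`) -/
noncomputable def cls (i : Λ.Idec) : Λ.K :=
  if h : Λ.proj i then 0 else FreeAbelianGroup.of ⟨i, h⟩

/-- the class `[X] ∈ K` of a module `X` -/
noncomputable def clsM (X : Λ.Mod) : Λ.K := (X.map Λ.cls).sum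

/-- the endomorphism `L` of `K` with `L [X] = [Ω X]` -/
noncomputable def L : Λ.K →+ Λ.K :=
  FreeAbelianGroup.lift fun i => Λ.clsM (Λ.syz i.1)

/-- `⟨X⟩` : the subgroup of `K` generated by the classes of the indecomposable
non-projective direct summands of `X` -/
def gen (X : Λ.Mod) : AddSubgroup Λ.K :=
  AddSubgroup.closure (Λ.cls '' {i | i ∈ X})

/-- the rank of a subgroup of `K` -/
noncomputable def rk (H : AddSubgroup Λ.K) : Cardinal :=
  Module.rank ℤ (AddSubgroup.toIntSubmodule H)

/-- the iterated image `L^k H` of a subgroup of `K` -/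
noncomputable def Lpow (k : ℕ) (H : AddSubgroup Λ.K) : AddSubgroup Λ.K :=
  (fun H' => AddSubgroup.map Λ.L H')^[k] H

/-- the (first) Igusa–Todorov function
`Φ(X) = min {n | rk L^k⟨X⟩ = rk L^(k+1)⟨X⟩ for all k ≥ n}` -/
noncomputable def Phi (X : Λ.Mod) : ℕ :=
  sInf {n : ℕ | ∀ k, n ≤ k →
    Λ.rk (Λ.Lpow k (Λ.gen X)) = Λ.rk (Λ.Lpow (k + 1) (Λ.gen X))}

/-- `add C` : the closure of a class of modules under finite direct sums and
direct summands -/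
def addCl (C : Set Λ.Mod) : Set Λ.Mod :=
  {X | ∃ Y ∈ AddSubmonoid.closure C, X ≤ Y}

/-- `C ⊕ D` : the class of direct sums of a module of `C` and a module of `D` -/
def oplus (C D : Set Λ.Mod) : Set Λ.Mod :=
  {X | ∃ Y ∈ C, ∃ Z ∈ D, X = Y + Z}

/-- the finitistic dimension of a class:
`fin.dim C = sup {pd X | X ∈ C, pd X < ∞}` -/
noncomputable def findim (C : Set Λ.Mod) : ℕ∞ :=
  sSup (Λ.pd '' {X | X ∈ C ∧ Λ.pd X ≠ ⊤})

/-- the (second) Igusa–Todorov function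
`Ψ(X) = Φ(X) + fin.dim (add Ω^(Φ X) X)` -/
noncomputable def Psi (X : Λ.Mod) : ℕ∞ :=
  (Λ.Phi X : ℕ∞) + Λ.findim (Λ.addCl {Λ.Ω^[Λ.Phi X] X})

/-- the `Φ`-dimension of a class -/
noncomputable def PhiDim (C : Set Λ.Mod) : ℕ∞ := ⨆ X ∈ C, (Λ.Phi X : ℕ∞)

/-- the `Ψ`-dimension of a class -/
noncomputable def PsiDim (C : Set Λ.Mod) : ℕ∞ := ⨆ X ∈ C, Λ.Psi X

/-- `C` is an `(n,t,V,D)`-GLIT class, relative to the relation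
`ses X₁ X₀ Z` ↔ "there is a short exact sequence `0 → X₁ → X₀ → Z → 0`":
`D` is additively closed, `t`-syzygy invariant with `Φ`-dim`(D) < ∞`, and every
`C ∈ 𝒞` admits a s.e.s. `0 → V₁ ⊕ D₁ → V₀ ⊕ D₀ → Ω^n C → 0` with `Vᵢ ∈ add V`,
`Dᵢ ∈ D`. -/
def IsGLIT (ses : Λ.Mod → Λ.Mod → Λ.Mod → Prop) (C : Set Λ.Mod)
    (n t : ℕ) (V : Λ.Mod) (D : Set Λ.Mod) : Prop :=
  1 ≤ t ∧ Λ.addCl D = D ∧ (∀ X ∈ D, Λ.Ω^[t] X ∈ D) ∧ Λ.PhiDim D ≠ ⊤ ∧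
    ∀ X ∈ C, ∃ V₁ ∈ Λ.addCl {V}, ∃ V₀ ∈ Λ.addCl {V}, ∃ D₁ ∈ D, ∃ D₀ ∈ D,
      ses (V₁ + D₁) (V₀ + D₀) (Λ.Ω^[n] X)

/-- the subgroup of `K` generated by the classes of the summands of modules of `D` -/
noncomputable def relSub (D : Set Λ.Mod) : AddSubgroup Λ.K :=
  AddSubgroup.closure (Λ.cls '' {i | ∃ X ∈ D, i ∈ X})

/-- the rank of (the image of) a subgroup of `K` in the quotient of `K` by the
classes of modules of `D` -/
noncomputable def rkRel (D : Set Λ.Mod) (H : AddSubgroup Λ.K) : Cardinal :=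
  Module.rank ℤ
    ((AddSubgroup.toIntSubmodule H).map (AddSubgroup.toIntSubmodule (Λ.relSub D)).mkQ)

/-- the generalized Igusa–Todorov function `Φ_{[D]}` relative to a class `D`:
defined as `Φ`, but with ranks computed in the quotient of `K` by the subgroup
generated by the classes of modules in `D` (and of projectives) -/
noncomputable def PhiRel (D : Set Λ.Mod) (X : Λ.Mod) : ℕ :=
  sInf {n : ℕ | ∀ k, n ≤ k →
    Λ.rkRel D (Λ.Lpow k (Λ.gen X)) = Λ.rkRel D (Λ.Lpow (k + 1) (Λ.gen X))}

end ModData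


namespace GLIT

open Submodule Module

variable (Λ : ModData)

/-- the ambient `ℚ`-vector space -/
abbrev Vq : Type := {i : Λ.Idec // ¬ Λ.proj i} →₀ ℚ

/-- the embedding of `K` into `Vq` -/
noncomputable def jz : Λ.K →ₗ[ℤ] Vq Λ :=
  ((Finsupp.mapRange.addMonoidHom (Int.castAddHom ℚ)).comp
    (FreeAbelianGroup.equivFinsupp _).toAddMonoidHom).toIntLinearMap

lemma jz_injective : Function.Injective (jz Λ) := by
  intro x y h
  apply (FreeAbelianGroup.equivFinsupp _).injective
  ext a
  have h2 : Finsupp.mapRange.addMonoidHom (Int.castAddHom ℚ)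
      ((FreeAbelianGroup.equivFinsupp _) x) =
      Finsupp.mapRange.addMonoidHom (Int.castAddHom ℚ)
      ((FreeAbelianGroup.equivFinsupp _) y) := h
  have h3 := congrArg (fun g => g a) (congrArg DFunLike.coe h2)
  simp only [Finsupp.mapRange.addMonoidHom_apply, Finsupp.mapRange_apply] at h3
  exact Int.cast_injective (α := ℚ) h3

lemma jz_of (i : {i : Λ.Idec // ¬ Λ.proj i}) :
    jz Λ (FreeAbelianGroup.of i) = Finsupp.single i 1 := by
  show Finsupp.mapRange.addMonoidHom (Int.castAddHom ℚ)
      ((FreeAbelianGroup.equivFinsupp _) (FreeAbelianGroup.of i)) = _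
  have h : (FreeAbelianGroup.equivFinsupp _) (FreeAbelianGroup.of i)
      = Finsupp.single i (1 : ℤ) := FreeAbelianGroup.toFinsupp_of i
  rw [h]
  ext a
  rw [Finsupp.mapRange.addMonoidHom_apply, Finsupp.mapRange_apply]
  simp [Finsupp.single_apply]

/-- the `ℚ`-linear extension of `L` -/
noncomputable def Lq : Vq Λ →ₗ[ℚ] Vq Λ :=
  Finsupp.lsum ℚ fun i => LinearMap.toSpanSingleton ℚ (Vq Λ)
    (jz Λ (Λ.L (FreeAbelianGroup.of i)))

lemma Lq_jz (x : Λ.K) : Lq Λ (jz Λ x) = jz Λ (Λ.L x) := by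
  refine FreeAbelianGroup.induction_on x ?_ ?_ ?_ ?_
  · simp
  · intro i
    rw [jz_of]
    show (Finsupp.lsum ℚ fun i => LinearMap.toSpanSingleton ℚ (Vq Λ)
      (jz Λ (Λ.L (FreeAbelianGroup.of i)))) (Finsupp.single i 1) = _
    rw [Finsupp.lsum_single, LinearMap.toSpanSingleton_apply, one_smul]
  · intro i h
    simp only [map_neg, h]
  · intro a b ha hb
    simp only [map_add, ha, hb]

/-- the image span of a subgroup of `K` -/
noncomputable def Qs (H : AddSubgroup Λ.K) : Submodule ℚ (Vq Λ) :=
  span ℚ (jz Λ '' (H : Set Λ.K))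

lemma Qs_closure (s : Set Λ.K) :
    Qs Λ (AddSubgroup.closure s) = span ℚ (jz Λ '' s) := by
  refine le_antisymm ?_ (span_mono (Set.image_mono AddSubgroup.subset_closure))
  rw [Qs, span_le]
  rintro _ ⟨x, hx, rfl⟩
  have hsub : AddSubgroup.closure s ≤
      ((span ℚ (jz Λ '' s)).toAddSubgroup).comap (jz Λ).toAddMonoidHom := by
    rw [AddSubgroup.closure_le]
    intro y hy
    exact subset_span ⟨y, hy, rfl⟩
  exact hsub hx

lemma Qs_map (H : AddSubgroup Λ.K) :
    Qs Λ (AddSubgroup.map Λ.L H) = (Qs Λ H).map (Lq Λ) := by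
  rw [Qs, Qs, Submodule.map_span]
  congr 1
  rw [AddSubgroup.coe_map, ← Set.image_comp, ← Set.image_comp]
  exact Set.image_congr fun x _ => (Lq_jz Λ x).symm

lemma Qs_Lpow (k : ℕ) (H : AddSubgroup Λ.K) :
    Qs Λ (Λ.Lpow k H) = (Qs Λ H).map ((Lq Λ) ^ k) := by
  induction k with
  | zero =>
    show Qs Λ H = _
    rw [pow_zero, Module.End.one_eq_id, Submodule.map_id]
  | succ k ih =>
    have h1 : Λ.Lpow (k + 1) H = AddSubgroup.map Λ.L (Λ.Lpow k H) :=
      Function.iterate_succ_apply' _ k H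
    rw [h1, Qs_map, ih, pow_succ', Module.End.mul_eq_comp, Submodule.map_comp]

lemma map_pow_succ (U : Submodule ℚ (Vq Λ)) (k : ℕ) :
    U.map ((Lq Λ) ^ (k + 1)) = (U.map ((Lq Λ) ^ k)).map (Lq Λ) := by
  rw [pow_succ', Module.End.mul_eq_comp, Submodule.map_comp]

lemma pow_apply_succ (x : Vq Λ) (k : ℕ) :
    ((Lq Λ) ^ (k + 1)) x = Lq Λ (((Lq Λ) ^ k) x) := by
  rw [pow_succ', Module.End.mul_apply]

/-- auxiliary: integral multiples landing in an integral submodule -/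
lemma exists_int_smul_mem {V : Type*} [AddCommGroup V] [Module ℚ V] (J : Submodule ℤ V)
    {y : V} (hy : y ∈ span ℚ (J : Set V)) : ∃ m : ℤ, m ≠ 0 ∧ m • y ∈ J := by
  induction hy using Submodule.span_induction with
  | mem x hx => exact ⟨1, one_ne_zero, by simpa using hx⟩
  | zero => exact ⟨1, one_ne_zero, by simp⟩
  | add x y _ _ ihx ihy =>
    obtain ⟨a, ha, hax⟩ := ihx
    obtain ⟨b, hb, hby⟩ := ihy
    refine ⟨a * b, mul_ne_zero ha hb, ?_⟩
    rw [smul_add, show (a * b) • x = b • (a • x) by rw [mul_comm, mul_smul],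
      show (a * b) • y = a • (b • y) from mul_smul a b y]
    exact J.add_mem (J.smul_mem _ hax) (J.smul_mem _ hby)
  | smul q x _ ih =>
    obtain ⟨a, ha, hax⟩ := ih
    have hden : ((q.den : ℤ)) ≠ 0 := Int.natCast_ne_zero.mpr q.den_nz
    refine ⟨(q.den : ℤ) * a, mul_ne_zero hden ha, ?_⟩
    have key : ((q.den : ℤ) * a) • (q • x) = q.num • (a • x) := by
      rw [← Int.cast_smul_eq_zsmul ℚ ((q.den : ℤ) * a),
        ← Int.cast_smul_eq_zsmul ℚ q.num, ← Int.cast_smul_eq_zsmul ℚ a,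
        smul_smul, smul_smul]
      congr 1
      have hq : (q.den : ℚ) * q = q.num := by
        rw [mul_comm, Rat.mul_den_eq_num]
      push_cast
      linear_combination (a : ℚ) * hq
    rw [key]
    exact J.smul_mem _ hax

lemma rank_span_rat {V : Type*} [AddCommGroup V] [Module ℚ V] (J : Submodule ℤ V) :
    Module.rank ℚ (span ℚ (J : Set V)) = Module.rank ℤ J := by
  have hJU : J ≤ (span ℚ (J : Set V)).restrictScalars ℤ := fun x hx => subset_span hx
  let f : J →ₗ[ℤ] ((span ℚ (J : Set V)).restrictScalars ℤ) := Submodule.inclusion hJU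
  haveI : IsLocalizedModule (nonZeroDivisors ℤ) f := by
    constructor
    · rintro ⟨m, hm⟩
      have hm0 : (m : ℚ) ≠ 0 := Int.cast_ne_zero.mpr (nonZeroDivisors.ne_zero hm)
      rw [Module.End.isUnit_iff]
      constructor
      · intro a b hab
        have h1 : m • a = m • b := by
          simpa [Module.algebraMap_end_apply] using hab
        have h2 : (m : ℚ) • (a : V) = (m : ℚ) • (b : V) := by
          have h3 := congrArg Subtype.val h1
          simpa [Int.cast_smul_eq_zsmul] using h3
        exact Subtype.ext (smul_right_injective V hm0 h2)
      · intro y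
        have hy : ((m : ℚ)⁻¹ • (y : V)) ∈ span ℚ (J : Set V) :=
          Submodule.smul_mem _ _ y.2
        refine ⟨⟨(m : ℚ)⁻¹ • (y : V), hy⟩, ?_⟩
        apply Subtype.ext
        show (m : ℤ) • ((m : ℚ)⁻¹ • (y : V)) = (y : V)
        rw [← Int.cast_smul_eq_zsmul ℚ, smul_smul, mul_inv_cancel₀ hm0, one_smul]
    · intro y
      obtain ⟨m, hm, hmy⟩ := exists_int_smul_mem J y.2
      refine ⟨⟨⟨m • (y : V), hmy⟩, ⟨m, mem_nonZeroDivisors_of_ne_zero hm⟩⟩, ?_⟩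
      apply Subtype.ext
      show ((⟨m, _⟩ : nonZeroDivisors ℤ) • y : V) = m • (y : V)
      rw [Submonoid.smul_def]
    · intro x y h
      exact ⟨1, by rw [Submodule.inclusion_injective hJU h]⟩
  have h := IsLocalizedModule.rank_eq (p := nonZeroDivisors ℤ) le_rfl f
  rw [← h, IsLocalization.rank_eq (S := ℚ) (p := nonZeroDivisors ℤ) le_rfl]
  exact (((Submodule.restrictScalarsEquiv ℤ ℚ V (span ℚ (J : Set V))).restrictScalars ℤ).rank_eq).symm

lemma rk_eq_rank_Qs (H : AddSubgroup Λ.K) :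
    Λ.rk H = Module.rank ℚ (Qs Λ H) := by
  have h1 : Qs Λ H = span ℚ
      ((Submodule.map (jz Λ) (AddSubgroup.toIntSubmodule H) : Submodule ℤ (Vq Λ)) :
        Set (Vq Λ)) := rfl
  rw [h1, rank_span_rat]
  show Module.rank ℤ (AddSubgroup.toIntSubmodule H) = _
  exact LinearEquiv.rank_eq
    (Submodule.equivMapOfInjective (jz Λ) (jz_injective Λ) (AddSubgroup.toIntSubmodule H))

/-- the span of the classes of the summands of a set of indecomposables -/
noncomputable def Ws (s : Set Λ.Idec) : Submodule ℚ (Vq Λ) :=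
  span ℚ (jz Λ '' (Λ.cls '' s))

lemma Qs_gen (X : Λ.Mod) : Qs Λ (Λ.gen X) = Ws Λ {i | i ∈ X} := by
  rw [ModData.gen, Qs_closure, Ws]

lemma Ws_mono {s t : Set Λ.Idec} (h : s ⊆ t) : Ws Λ s ≤ Ws Λ t :=
  span_mono (Set.image_mono (Set.image_mono h))

lemma Ws_union (s t : Set Λ.Idec) : Ws Λ (s ∪ t) = Ws Λ s ⊔ Ws Λ t := by
  simp only [Ws, Set.image_union, span_union]

lemma Ws_singleton (i : Λ.Idec) : Ws Λ {i} = span ℚ {jz Λ (Λ.cls i)} := by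
  simp only [Ws, Set.image_singleton]

lemma rk_lpow (X : Λ.Mod) (k : ℕ) :
    Λ.rk (Λ.Lpow k (Λ.gen X)) = Module.rank ℚ ((Ws Λ {i | i ∈ X}).map ((Lq Λ) ^ k)) := by
  rw [rk_eq_rank_Qs, Qs_Lpow, Qs_gen]

lemma finite_mem_set (X : Λ.Mod) : ({i | i ∈ X} : Set Λ.Idec).Finite := by
  have h : ({i | i ∈ X} : Set Λ.Idec) ⊆ ↑X.toFinset := fun i hi => by
    simpa [Multiset.mem_toFinset] using hi
  exact Set.Finite.subset X.toFinset.finite_toSet h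

lemma fd_Ws {s : Set Λ.Idec} (hs : s.Finite) : FiniteDimensional ℚ (Ws Λ s) :=
  FiniteDimensional.span_of_finite _ ((hs.image _).image _)

lemma fdm (X : Λ.Mod) (k : ℕ) :
    FiniteDimensional ℚ ((Ws Λ {i | i ∈ X}).map ((Lq Λ) ^ k)) := by
  haveI := fd_Ws Λ (finite_mem_set Λ X)
  infer_instance

/-- the rank function of the Igusa–Todorov filtration, as a natural number -/
noncomputable def dd (X : Λ.Mod) (k : ℕ) : ℕ :=
  finrank ℚ ((Ws Λ {i | i ∈ X}).map ((Lq Λ) ^ k))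

lemma dd_cast (X : Λ.Mod) (k : ℕ) :
    Λ.rk (Λ.Lpow k (Λ.gen X)) = (dd Λ X k : Cardinal) := by
  haveI := fdm Λ X k
  rw [rk_lpow]
  exact (Module.finrank_eq_rank ℚ _).symm

lemma dd_eq_iff (X : Λ.Mod) (k l : ℕ) :
    Λ.rk (Λ.Lpow k (Λ.gen X)) = Λ.rk (Λ.Lpow l (Λ.gen X)) ↔ dd Λ X k = dd Λ X l := by
  rw [dd_cast, dd_cast, Nat.cast_inj]

lemma dd_anti (X : Λ.Mod) : ∀ j k : ℕ, j ≤ k → dd Λ X k ≤ dd Λ X j := by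
  intro j k hjk
  induction k, hjk using Nat.le_induction with
  | base => exact le_rfl
  | succ k hk ih =>
    refine le_trans ?_ ih
    haveI := fdm Λ X k
    show finrank ℚ ((Ws Λ {i | i ∈ X}).map ((Lq Λ) ^ (k + 1))) ≤ _
    rw [map_pow_succ]
    exact Submodule.finrank_map_le _ _

lemma phi_le (X : Λ.Mod) (M : ℕ)
    (h : ∀ k, M ≤ k → Λ.rk (Λ.Lpow k (Λ.gen X)) = Λ.rk (Λ.Lpow (k + 1) (Λ.gen X))) :
    Λ.Phi X ≤ M :=
  Nat.sInf_le h

lemma dd_stab (X : Λ.Mod) {n : ℕ} (hn : Λ.Phi X ≤ n) :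
    ∀ k, n ≤ k → dd Λ X k = dd Λ X (k + 1) := by
  obtain ⟨N, hN⟩ : ∃ N, ∀ k, N ≤ k → dd Λ X k = dd Λ X N := by
    obtain ⟨N, hN⟩ := Nat.sInf_mem (s := Set.range (dd Λ X)) ⟨dd Λ X 0, 0, rfl⟩
    refine ⟨N, fun k hk => le_antisymm (dd_anti Λ X N k hk) ?_⟩
    rw [hN]
    exact Nat.sInf_le ⟨k, rfl⟩
  have hNS : ∀ k, N ≤ k →
      Λ.rk (Λ.Lpow k (Λ.gen X)) = Λ.rk (Λ.Lpow (k + 1) (Λ.gen X)) := fun k hk =>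
    (dd_eq_iff Λ X k (k + 1)).mpr (by rw [hN k hk, hN (k + 1) (hk.trans (Nat.le_succ k))])
  have hne : Set.Nonempty {m : ℕ | ∀ k, m ≤ k →
      Λ.rk (Λ.Lpow k (Λ.gen X)) = Λ.rk (Λ.Lpow (k + 1) (Λ.gen X))} := ⟨N, hNS⟩
  have hmem : ∀ k, Λ.Phi X ≤ k →
      Λ.rk (Λ.Lpow k (Λ.gen X)) = Λ.rk (Λ.Lpow (k + 1) (Λ.gen X)) := Nat.sInf_mem hne
  intro k hk
  exact (dd_eq_iff Λ X k (k + 1)).mp (hmem k (le_trans hn hk))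

/-- the membership predicate: the `k`-th shift of the class of `v` lies in the `k`-th
shifted space of `Y` -/
def mm (v : Λ.Idec) (k : ℕ) (Y : Λ.Mod) : Prop :=
  ((Lq Λ) ^ k) (jz Λ (Λ.cls v)) ∈ (Ws Λ {i | i ∈ Y}).map ((Lq Λ) ^ k)

lemma mm_succ {v : Λ.Idec} {k : ℕ} {Y : Λ.Mod} (h : mm Λ v k Y) : mm Λ v (k + 1) Y := by
  have h2 := Submodule.mem_map_of_mem (f := Lq Λ) h
  rw [← map_pow_succ] at h2
  show ((Lq Λ) ^ (k + 1)) (jz Λ (Λ.cls v)) ∈ _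
  rw [pow_apply_succ]
  exact h2

lemma mm_mono_le {v : Λ.Idec} {Y : Λ.Mod} {k l : ℕ} (hkl : k ≤ l) (h : mm Λ v k Y) :
    mm Λ v l Y := by
  induction l, hkl using Nat.le_induction with
  | base => exact h
  | succ l hl ih => exact mm_succ Λ ih

lemma mm_mono_set {v : Λ.Idec} {Y Z : Λ.Mod} {k : ℕ}
    (h : {i : Λ.Idec | i ∈ Y} ⊆ {i | i ∈ Z}) (hm : mm Λ v k Y) : mm Λ v k Z :=
  Submodule.map_mono (Ws_mono Λ h) hm

/-- the key downward step -/
lemma step (v : Λ.Idec) (Y Z : Λ.Mod) (j : ℕ)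
    (hle : {i : Λ.Idec | i ∈ Y} ⊆ {i | i ∈ Z})
    (hd : dd Λ Z j = dd Λ Z (j + 1))
    (hxZ : mm Λ v j Z)
    (h1 : mm Λ v (j + 1) Y) : mm Λ v j Y := by
  haveI := fdm Λ Z j
  set U := (Ws Λ {i | i ∈ Z}).map ((Lq Λ) ^ j) with hU
  let f := (Lq Λ).domRestrict U
  have hker : LinearMap.ker f = ⊥ := by
    have h3 := LinearMap.finrank_range_add_finrank_ker f
    rw [LinearMap.range_domRestrict] at h3
    have h4 : U.map (Lq Λ) = (Ws Λ {i | i ∈ Z}).map ((Lq Λ) ^ (j + 1)) :=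
      (map_pow_succ Λ _ j).symm
    rw [h4] at h3
    have hd' := hd
    simp only [dd] at hd'
    rw [← hU] at hd'
    have h6 : finrank ℚ (LinearMap.ker f) = 0 := by omega
    exact Submodule.finrank_eq_zero.mp h6
  obtain ⟨u, hu, huq⟩ : ∃ u ∈ (Ws Λ {i | i ∈ Y}).map ((Lq Λ) ^ j),
      Lq Λ u = ((Lq Λ) ^ (j + 1)) (jz Λ (Λ.cls v)) := by
    have h2 : ((Lq Λ) ^ (j + 1)) (jz Λ (Λ.cls v)) ∈
        ((Ws Λ {i | i ∈ Y}).map ((Lq Λ) ^ j)).map (Lq Λ) := by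
      rw [← map_pow_succ]
      exact h1
    obtain ⟨u, hu, huq⟩ := Submodule.mem_map.mp h2
    exact ⟨u, hu, huq⟩
  have huZ : u ∈ U := Submodule.map_mono (Ws_mono Λ hle) hu
  have hxZ' : ((Lq Λ) ^ j) (jz Λ (Λ.cls v)) ∈ U := hxZ
  have heq : f ⟨u, huZ⟩ = f ⟨_, hxZ'⟩ := by
    show Lq Λ u = Lq Λ (((Lq Λ) ^ j) (jz Λ (Λ.cls v)))
    rw [huq, pow_apply_succ]
  have h7 := LinearMap.ker_eq_bot.mp hker heq
  have hux : u = ((Lq Λ) ^ j) (jz Λ (Λ.cls v)) := congrArg Subtype.val h7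
  show ((Lq Λ) ^ j) (jz Λ (Λ.cls v)) ∈ (Ws Λ {i | i ∈ Y}).map ((Lq Λ) ^ j)
  rw [← hux]
  exact hu

lemma finrank_sup_span_singleton {K V : Type*} [Field K] [AddCommGroup V] [Module K V]
    (U : Submodule K V) [FiniteDimensional K U] {x : V} (hx : x ∉ U) :
    finrank K ↥(U ⊔ span K {x}) = finrank K U + 1 := by
  have hx0 : x ≠ 0 := fun h => hx (h ▸ U.zero_mem)
  haveI : FiniteDimensional K ↥(span K {x}) :=
    FiniteDimensional.span_of_finite _ (Set.finite_singleton x)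
  have hinf : U ⊓ span K {x} = ⊥ := by
    rw [eq_bot_iff]
    intro y hy
    obtain ⟨hyU, hyS⟩ := Submodule.mem_inf.mp hy
    obtain ⟨c, rfl⟩ := Submodule.mem_span_singleton.mp hyS
    rcases eq_or_ne c 0 with rfl | hc
    · simp
    · exact absurd (by simpa [smul_smul, inv_mul_cancel₀ hc] using U.smul_mem c⁻¹ hyU) hx
  have h := Submodule.finrank_sup_add_finrank_inf_eq U (span K {x})
  rw [hinf, finrank_span_singleton hx0, finrank_bot] at h
  omega

end GLIT

/-- for an indecomposable module `V` and an additively closed class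
`D` with `Φ-dim D = n < ∞` (no syzygy invariance assumed),
`Φ-dim (D ⊕ add V) < ∞`. -/
theorem PhiDim_oplus_indecomposable_finite (Λ : ModData) (v : Λ.Idec)
    (D : Set Λ.Mod) (haddD : Λ.addCl D = D)
    (n : ℕ) (hD : Λ.PhiDim D = (n : ℕ∞)) :
    Λ.PhiDim (Λ.oplus D (Λ.addCl {({v} : Λ.Mod)})) ≠ ⊤ := by
  classical
  -- sums of members of `D` stay in `D`
  have hsum : ∀ Y ∈ D, ∀ Y' ∈ D, Y + Y' ∈ D := by
    intro Y hY Y' hY'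
    have h1 : Y + Y' ∈ Λ.addCl D :=
      ⟨Y + Y', AddSubmonoid.add_mem _ (AddSubmonoid.subset_closure hY)
        (AddSubmonoid.subset_closure hY'), le_rfl⟩
    rwa [haddD] at h1
  -- every member of `D` has `Φ ≤ n`
  have hphi : ∀ Y ∈ D, Λ.Phi Y ≤ n := by
    intro Y hY
    have h1 : (Λ.Phi Y : ℕ∞) ≤ ⨆ X ∈ D, (Λ.Phi X : ℕ∞) :=
      le_iSup₂ (f := fun X (_ : X ∈ D) => (Λ.Phi X : ℕ∞)) Y hY
    have h2 : (⨆ X ∈ D, (Λ.Phi X : ℕ∞)) = (n : ℕ∞) := hD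
    rw [h2] at h1
    exact_mod_cast h1
  have hstab : ∀ Y ∈ D, ∀ k, n ≤ k → GLIT.dd Λ Y k = GLIT.dd Λ Y (k + 1) :=
    fun Y hY => GLIT.dd_stab Λ Y (hphi Y hY)
  -- choose the uniform bound `M`
  obtain ⟨M, hMn, key2⟩ : ∃ M, n ≤ M ∧ ∀ Y ∈ D,
      (∀ j, ¬ GLIT.mm Λ v j Y) ∨ (∀ k, M ≤ k → GLIT.mm Λ v k Y) := by
    by_cases hex : ∃ Y₀ ∈ D, ∃ k₀, GLIT.mm Λ v k₀ Y₀
    · obtain ⟨Y₀, hY₀, k₀, hk₀⟩ := hex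
      refine ⟨max n k₀, le_max_left _ _, ?_⟩
      intro Y hY
      by_cases hYm : ∃ j, GLIT.mm Λ v j Y
      · right
        obtain ⟨j, hj⟩ := hYm
        have hZD : Y₀ + Y ∈ D := hsum Y₀ hY₀ Y hY
        have hsubY : {i : Λ.Idec | i ∈ Y} ⊆ {i | i ∈ Y₀ + Y} := fun i hi =>
          Multiset.mem_add.mpr (Or.inr hi)
        have hsubY₀ : {i : Λ.Idec | i ∈ Y₀} ⊆ {i | i ∈ Y₀ + Y} := fun i hi =>
          Multiset.mem_add.mpr (Or.inl hi)
        have hdown : ∀ t : ℕ, ∀ k, max n k₀ ≤ k → k + t = max j (max n k₀) →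
            GLIT.mm Λ v k Y := by
          intro t
          induction t with
          | zero =>
            intro k hk hkt
            have hjk : j ≤ k := by omega
            exact GLIT.mm_mono_le Λ hjk hj
          | succ t ih =>
            intro k hk hkt
            have h1 : GLIT.mm Λ v (k + 1) Y :=
              ih (k + 1) (hk.trans (Nat.le_succ k)) (by omega)
            refine GLIT.step Λ v Y (Y₀ + Y) k hsubY
              (hstab _ hZD k (le_trans (le_max_left n k₀) hk)) ?_ h1
            exact GLIT.mm_mono_set Λ hsubY₀
              (GLIT.mm_mono_le Λ (le_trans (le_max_right n k₀) hk) hk₀)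
        intro k hk
        have hMle : max n k₀ ≤ max j (max n k₀) := le_max_right _ _
        have hM : GLIT.mm Λ v (max n k₀) Y :=
          hdown (max j (max n k₀) - max n k₀) (max n k₀) le_rfl (by omega)
        exact GLIT.mm_mono_le Λ hk hM
      · left
        push_neg at hYm
        exact hYm
    · refine ⟨n, le_rfl, fun Y hY => Or.inl ?_⟩
      push_neg at hex
      exact fun j => hex Y hY j
  -- every member of the class has `Φ ≤ M`
  have hb : ∀ X ∈ Λ.oplus D (Λ.addCl {({v} : Λ.Mod)}), Λ.Phi X ≤ M := by
    rintro X ⟨Y, hY, Z, hZ, rfl⟩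
    have hZv : ∀ i ∈ Z, i = v := by
      obtain ⟨Wm, hWm, hZW⟩ := hZ
      obtain ⟨c, hc⟩ := AddSubmonoid.mem_closure_singleton.mp hWm
      intro i hi
      have h1 : i ∈ Wm := Multiset.mem_of_le hZW hi
      rw [← hc, Multiset.nsmul_singleton] at h1
      exact Multiset.eq_of_mem_replicate h1
    have hsetYZ : {i : Λ.Idec | i ∈ Y + Z} = {i | i ∈ Y} ∪ {i | i ∈ Z} :=
      Set.ext fun i => Multiset.mem_add
    have hZsub : {i : Λ.Idec | i ∈ Z} ⊆ {v} := fun i hi => hZv i hi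
    refine GLIT.phi_le Λ _ M ?_
    rcases Set.subset_singleton_iff_eq.mp hZsub with hZe | hZe
    · -- no `v`-component
      have hW : GLIT.Ws Λ {i | i ∈ Y + Z} = GLIT.Ws Λ {i | i ∈ Y} := by
        rw [hsetYZ, hZe, Set.union_empty]
      have hdd : ∀ l, GLIT.dd Λ (Y + Z) l = GLIT.dd Λ Y l := fun l => by
        simp only [GLIT.dd]
        rw [hW]
      intro k hk
      refine (GLIT.dd_eq_iff Λ _ _ _).mpr ?_
      rw [hdd k, hdd (k + 1)]
      exact hstab Y hY k (hMn.trans hk)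
    · -- `v`-component present
      have hW : GLIT.Ws Λ {i | i ∈ Y + Z}
          = GLIT.Ws Λ {i | i ∈ Y} ⊔ Submodule.span ℚ {GLIT.jz Λ (Λ.cls v)} := by
        rw [hsetYZ, hZe, GLIT.Ws_union, GLIT.Ws_singleton]
      have hform : ∀ l, GLIT.dd Λ (Y + Z) l
          = Module.finrank ℚ ↥((GLIT.Ws Λ {i | i ∈ Y}).map ((GLIT.Lq Λ) ^ l)
            ⊔ Submodule.span ℚ {((GLIT.Lq Λ) ^ l) (GLIT.jz Λ (Λ.cls v))}) := by
        intro l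
        simp only [GLIT.dd]
        rw [hW, Submodule.map_sup, Submodule.map_span, Set.image_singleton]
      intro k hk
      refine (GLIT.dd_eq_iff Λ _ _ _).mpr ?_
      rcases key2 Y hY with hnever | hall
      · haveI := GLIT.fdm Λ Y k
        haveI := GLIT.fdm Λ Y (k + 1)
        rw [hform k, hform (k + 1),
          GLIT.finrank_sup_span_singleton _ (hnever k),
          GLIT.finrank_sup_span_singleton _ (hnever (k + 1))]
        have h1 := hstab Y hY k (hMn.trans hk)
        simp only [GLIT.dd] at h1
        omega
      · have h1 : Submodule.span ℚ {((GLIT.Lq Λ) ^ k) (GLIT.jz Λ (Λ.cls v))}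
            ≤ (GLIT.Ws Λ {i | i ∈ Y}).map ((GLIT.Lq Λ) ^ k) := by
          rw [Submodule.span_le, Set.singleton_subset_iff]
          exact hall k hk
        have h2 : Submodule.span ℚ {((GLIT.Lq Λ) ^ (k + 1)) (GLIT.jz Λ (Λ.cls v))}
            ≤ (GLIT.Ws Λ {i | i ∈ Y}).map ((GLIT.Lq Λ) ^ (k + 1)) := by
          rw [Submodule.span_le, Set.singleton_subset_iff]
          exact hall (k + 1) ((hk.trans (Nat.le_succ k)))
        rw [hform k, hform (k + 1), sup_eq_left.mpr h1, sup_eq_left.mpr h2]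
        have h3 := hstab Y hY k (hMn.trans hk)
        simpa only [GLIT.dd] using h3
  -- conclude
  have hone : Λ.PhiDim (Λ.oplus D (Λ.addCl {({v} : Λ.Mod)})) ≤ (M : ℕ∞) := by
    refine iSup₂_le fun X hX => ?_
    exact_mod_cast hb X hX
  intro htop
  rw [htop] at hone
  exact absurd hone (by simp)
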